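/- Let Φ ∈ P(M,N) and Ψ ∈ P(M,M−N) be Naimark complements and let k ≤ min{N, M−N}. Then ||Ψ_{K^c}||_* = ||Φ_K||_* + (M−N−k) for every K ⊆ [M] with |K| = k, where ||·||_* is the nuclear norm. Consequently NE_{M−k}(Ψ) = NE_k(Φ) + (M−N−k)·C(M,k). -/

import Mathlib

open Matrix Finset


noncomputable def colSub {N M : ℕ} (Φ : Matrix (Fin N) (Fin M) ℂ) (K : Finset (Fin M)) :
    Matrix (Fin N) ↥K ℂ := Φ.submatrix id (fun k => (k : Fin M))

/-- The k-dimensional volume of the parallelotope spanned by the columns of Φ indexed by K. -/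
noncomputable def vol {N M : ℕ} (Φ : Matrix (Fin N) (Fin M) ℂ) (K : Finset (Fin M)) : ℝ :=
  Real.sqrt (((colSub Φ K)ᴴ * colSub Φ K).det.re)


/-- The nuclear norm: the sum of the singular values, i.e. of the square roots of the
eigenvalues of Aᴴ * A. -/
noncomputable def nuclearNorm {m n : Type*} [Fintype m] [Fintype n] [DecidableEq n]
    (A : Matrix m n ℂ) : ℝ :=
  ∑ i, Real.sqrt ((Matrix.isHermitian_conjTranspose_mul_self A).eigenvalues i)

open Polynomial

lemma evalCharpoly {n : Type*} [DecidableEq n] [Fintype n] (M : Matrix n n ℂ) (x : ℂ) :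
    M.charpoly.eval x = (x • (1 : Matrix n n ℂ) - M).det := by
  rw [Matrix.charpoly, ← Polynomial.coe_evalRingHom, RingHom.map_det]
  congr 1
  ext i j
  by_cases h : i = j <;>
    simp [h, Matrix.charmatrix_apply, Matrix.one_apply, Matrix.diagonal_apply]

lemma det_smul_one_sub_mul {p q : Type*} [Fintype p] [DecidableEq p] [Fintype q] [DecidableEq q]
    {x : ℂ} (hx : x ≠ 0) (C : Matrix p q ℂ) (D : Matrix q p ℂ) :
    (x • (1 : Matrix p p ℂ) - C * D).det
      = x ^ (Fintype.card p) * (1 + ((-x⁻¹) • C) * D).det := by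
  have : x • (1 : Matrix p p ℂ) - C * D = x • (1 + ((-x⁻¹) • C) * D) := by
    rw [smul_add, Matrix.smul_mul, smul_smul]
    rw [mul_neg, mul_inv_cancel₀ hx, sub_eq_add_neg, neg_one_smul]
  rw [this, Matrix.det_smul]

lemma charpoly_AB_BA {m n : Type*} [DecidableEq m] [Fintype m] [DecidableEq n] [Fintype n]
    (A : Matrix m n ℂ) (B : Matrix n m ℂ) :
    X ^ (Fintype.card n) * (A * B).charpoly = X ^ (Fintype.card m) * (B * A).charpoly := by
  apply Polynomial.eq_of_infinite_eval_eq
  apply Set.Infinite.mono (s := {x : ℂ | x ≠ 0})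
  swap
  · apply Set.infinite_of_finite_compl
    simp [Set.Finite.subset (Set.finite_singleton 0)]
  intro x hx
  have hx : x ≠ 0 := hx
  simp only [Set.mem_setOf_eq, eval_mul, eval_pow, eval_X, evalCharpoly]
  rw [det_smul_one_sub_mul hx A B, det_smul_one_sub_mul hx B A]
  have : (1 + ((-x⁻¹) • A) * B).det = (1 + ((-x⁻¹) • B) * A).det := by
    rw [Matrix.det_one_add_mul_comm]
    congr 1
    rw [Matrix.mul_smul, Matrix.smul_mul]
  rw [this]; ring

noncomputable def eigM {n : Type*} [Fintype n] [DecidableEq n] {A : Matrix n n ℂ}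
    (hA : A.IsHermitian) : Multiset ℝ := Multiset.map hA.eigenvalues Finset.univ.val

lemma eigM_congr {n : Type*} [Fintype n] [DecidableEq n] {A B : Matrix n n ℂ}
    (h : A = B) (hA : A.IsHermitian) (hB : B.IsHermitian) : eigM hA = eigM hB := by
  subst h; rfl

lemma charpoly_of_unitary_diag {n : Type*} [Fintype n] [DecidableEq n]
    {A : Matrix n n ℂ} (U : Matrix.unitaryGroup n ℂ) (d : n → ℝ)
    (h : A = (U : Matrix n n ℂ) * Matrix.diagonal (fun i => (d i : ℂ)) * star (U : Matrix n n ℂ)) :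
    A.charpoly = ∏ i, (X - C ((d i : ℂ))) := by
  apply Polynomial.funext
  intro x
  rw [evalCharpoly, h]
  have hU : (U : Matrix n n ℂ) * star (U : Matrix n n ℂ) = 1 :=
    Matrix.mem_unitaryGroup_iff.mp U.2
  have h1 : x • (1 : Matrix n n ℂ)
      = (U : Matrix n n ℂ) * (x • (1 : Matrix n n ℂ)) * star (U : Matrix n n ℂ) := by
    rw [Matrix.mul_smul, Matrix.smul_mul, mul_one, hU]
  rw [h1, ← Matrix.sub_mul, ← Matrix.mul_sub, Matrix.det_mul, Matrix.det_mul,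
    mul_comm ((U : Matrix n n ℂ)).det, mul_assoc, ← Matrix.det_mul, hU]
  simp only [Matrix.det_one, mul_one]
  rw [Matrix.smul_one_eq_diagonal, Matrix.diagonal_sub, Matrix.det_diagonal]
  simp [Polynomial.eval_prod]

lemma eigM_of_unitary_diag {n : Type*} [Fintype n] [DecidableEq n]
    {A : Matrix n n ℂ} (hA : A.IsHermitian) (U : Matrix.unitaryGroup n ℂ) (d : n → ℝ)
    (h : A = (U : Matrix n n ℂ) * Matrix.diagonal (fun i => (d i : ℂ)) * star (U : Matrix n n ℂ)) :
    eigM hA = Multiset.map d Finset.univ.val := by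
  have h1 := charpoly_of_unitary_diag U d h
  have h2 := charpoly_of_unitary_diag (A := A) hA.eigenvectorUnitary hA.eigenvalues
    (by exact hA.spectral_theorem)
  rw [h2] at h1
  -- take roots
  have e : ∀ (f : n → ℝ), (∏ i, (X - C ((f i : ℂ))))
      = ((Multiset.map (fun r : ℝ => ((r : ℂ))) (Multiset.map f Finset.univ.val)).map
          (fun a => X - C a)).prod := by
    intro f
    rw [Multiset.map_map, Multiset.map_map, Finset.prod_eq_multiset_prod]
    rfl
  rw [e, e] at h1
  have := congrArg Polynomial.roots h1
  rw [Polynomial.roots_multiset_prod_X_sub_C, Polynomial.roots_multiset_prod_X_sub_C] at this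
  have := congrArg (Multiset.map Complex.re) this
  simpa [Multiset.map_map, Function.comp, eigM] using this

lemma charpoly_hermitian {n : Type*} [Fintype n] [DecidableEq n]
    {A : Matrix n n ℂ} (hA : A.IsHermitian) :
    A.charpoly = ((eigM hA).map (fun r : ℝ => X - C ((r : ℂ)))).prod := by
  have h2 := charpoly_of_unitary_diag (A := A) hA.eigenvectorUnitary hA.eigenvalues
    (by exact hA.spectral_theorem)
  rw [h2, eigM, Multiset.map_map, Finset.prod_eq_multiset_prod]
  rfl

lemma prodXsubC_injective {s t : Multiset ℝ}
    (h : (s.map (fun r : ℝ => X - C ((r:ℂ)))).prod = (t.map (fun r : ℝ => X - C ((r:ℂ)))).prod) :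
    s = t := by
  have e : ∀ u : Multiset ℝ, u.map (fun r : ℝ => X - C ((r:ℂ)))
      = (u.map (fun r : ℝ => ((r:ℂ)))).map (fun a => X - C a) := by
    intro u; rw [Multiset.map_map]; rfl
  rw [e, e] at h
  have h2 := congrArg Polynomial.roots h
  rw [Polynomial.roots_multiset_prod_X_sub_C, Polynomial.roots_multiset_prod_X_sub_C] at h2
  have h3 := congrArg (Multiset.map Complex.re) h2
  simpa [Multiset.map_map, Function.comp] using h3

lemma eigM_mul_comm {m n : Type*} [Fintype m] [DecidableEq m] [Fintype n] [DecidableEq n]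
    (A : Matrix m n ℂ) :
    eigM (Matrix.isHermitian_conjTranspose_mul_self A) + Multiset.replicate (Fintype.card m) 0
      = eigM (Matrix.isHermitian_mul_conjTranspose_self A)
        + Multiset.replicate (Fintype.card n) 0 := by
  apply prodXsubC_injective
  have key := charpoly_AB_BA A Aᴴ
  rw [charpoly_hermitian (Matrix.isHermitian_mul_conjTranspose_self A),
      charpoly_hermitian (Matrix.isHermitian_conjTranspose_mul_self A)] at key
  have xpow : ∀ a : ℕ, ((Multiset.replicate a (0:ℝ)).map (fun r : ℝ => X - C ((r:ℂ)))).prod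
      = (X : ℂ[X]) ^ a := by
    intro a
    rw [Multiset.map_replicate, Multiset.prod_replicate]
    simp
  rw [Multiset.map_add, Multiset.map_add, Multiset.prod_add, Multiset.prod_add, xpow, xpow]
  rw [mul_comm _ ((X:ℂ[X]) ^ Fintype.card m), mul_comm _ ((X:ℂ[X]) ^ Fintype.card n)]
  exact key.symm

lemma eigM_one_sub {n : Type*} [Fintype n] [DecidableEq n] {H : Matrix n n ℂ}
    (hH : H.IsHermitian) (h1 : ((1 : Matrix n n ℂ) - H).IsHermitian) :
    eigM h1 = (eigM hH).map (fun t => 1 - t) := by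
  have hU : (hH.eigenvectorUnitary : Matrix n n ℂ) * star (hH.eigenvectorUnitary : Matrix n n ℂ)
      = 1 := Matrix.mem_unitaryGroup_iff.mp hH.eigenvectorUnitary.2
  have rep : (1 : Matrix n n ℂ) - H = (hH.eigenvectorUnitary : Matrix n n ℂ)
      * Matrix.diagonal (fun i => (((1 - hH.eigenvalues i : ℝ)) : ℂ))
      * star (hH.eigenvectorUnitary : Matrix n n ℂ) := by
    have hd : Matrix.diagonal (fun i => (((1 - hH.eigenvalues i : ℝ)) : ℂ))
        = 1 - Matrix.diagonal (fun i => ((hH.eigenvalues i : ℝ) : ℂ)) := by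
      rw [← Matrix.diagonal_one, Matrix.diagonal_sub]
      congr 1
      funext i
      push_cast
      ring
    rw [hd, Matrix.mul_sub, Matrix.sub_mul, mul_one, hU]
    congr 1
    exact hH.spectral_theorem
  have := eigM_of_unitary_diag h1 hH.eigenvectorUnitary (fun i => 1 - hH.eigenvalues i) rep
  rw [this, eigM, Multiset.map_map]
  rfl

lemma sum_sqrt_eigM {n : Type*} [Fintype n] [DecidableEq n] {A : Matrix n n ℂ}
    (hA : A.IsHermitian) :
    ∑ i, Real.sqrt (hA.eigenvalues i) = ((eigM hA).map Real.sqrt).sum := by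
  rw [eigM, Multiset.map_map, Finset.sum_eq_multiset_sum]
  rfl

/-- For Naimark complements, nuclear norms of complementary subsets differ by M−N−k, and hence
the (M−k)-nuclear energy of Ψ equals the k-nuclear energy of Φ plus (M−N−k)·C(M,k). -/
theorem naimark_nuclear_energy {N L M k : ℕ}
    (Φ : Matrix (Fin N) (Fin M) ℂ) (Ψ : Matrix (Fin L) (Fin M) ℂ)
    (hL : N + L = M) (hkN : k ≤ N) (hkL : k ≤ L)
    (hΦ : Φ * Φᴴ = 1) (hΨ : Ψ * Ψᴴ = 1)
    (hNaimark : Ψᴴ * Ψ = 1 - Φᴴ * Φ) :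
    (∀ K : Finset (Fin M), K.card = k →
        nuclearNorm (colSub Ψ Kᶜ) = nuclearNorm (colSub Φ K) + ((L : ℝ) - (k : ℝ))) ∧
      ∑ K ∈ Finset.powersetCard (M - k) (Finset.univ : Finset (Fin M)),
          nuclearNorm (colSub Ψ K) =
        (∑ K ∈ Finset.powersetCard k (Finset.univ : Finset (Fin M)),
          nuclearNorm (colSub Φ K)) + ((L : ℝ) - (k : ℝ)) * (M.choose k : ℝ) := by
  have main : ∀ K : Finset (Fin M), K.card = k →
      nuclearNorm (colSub Ψ Kᶜ) = nuclearNorm (colSub Φ K) + ((L : ℝ) - (k : ℝ)) := by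
    intro K hK
    set A := colSub Ψ Kᶜ with hA_def
    set B := colSub Φ Kᶜ with hB_def
    set CM := colSub Φ K with hCM_def
    -- matrix identities
    have hA : Aᴴ * A = 1 - Bᴴ * B := by
      ext i j
      have h := congrFun (congrFun hNaimark (i : Fin M)) (j : Fin M)
      simp only [Matrix.mul_apply, Matrix.conjTranspose_apply, Matrix.sub_apply, hA_def, hB_def,
        colSub, Matrix.submatrix_apply, id] at h ⊢
      rw [h]
      congr 1
      by_cases hij : i = j
      · subst hij; simp
      · rw [Matrix.one_apply_ne hij, Matrix.one_apply_ne (fun h => hij (Subtype.ext h))]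
    have hB : B * Bᴴ = 1 - CM * CMᴴ := by
      ext i j
      have h := congrFun (congrFun hΦ i) j
      simp only [Matrix.mul_apply, Matrix.conjTranspose_apply, Matrix.sub_apply, hB_def, hCM_def,
        colSub, Matrix.submatrix_apply, id] at h ⊢
      rw [Finset.sum_coe_sort Kᶜ (fun m => Φ i m * star (Φ j m)),
        Finset.sum_coe_sort K (fun m => Φ i m * star (Φ j m))]
      rw [eq_sub_iff_add_eq, add_comm, Finset.sum_add_sum_compl]
      exact h
    -- eigenvalue multiset chain
    have h1herm : ((1 : Matrix (↥Kᶜ) (↥Kᶜ) ℂ) - Bᴴ * B).IsHermitian := by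
      rw [← hA]; exact Matrix.isHermitian_conjTranspose_mul_self A
    have s1 : eigM (Matrix.isHermitian_conjTranspose_mul_self A)
        = (eigM (Matrix.isHermitian_conjTranspose_mul_self B)).map (fun t => 1 - t) := by
      rw [eigM_congr hA (Matrix.isHermitian_conjTranspose_mul_self A) h1herm]
      exact eigM_one_sub (Matrix.isHermitian_conjTranspose_mul_self B) h1herm
    have cardKc : Fintype.card ↥(Kᶜ) = (L - k) + N := by
      rw [Fintype.card_coe, Finset.card_compl, hK, Fintype.card_fin]
      omega
    have s2 : eigM (Matrix.isHermitian_conjTranspose_mul_self B)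
        = eigM (Matrix.isHermitian_mul_conjTranspose_self B) + Multiset.replicate (L - k) 0 := by
      have h := eigM_mul_comm B
      rw [Fintype.card_fin, cardKc, Multiset.replicate_add, ← add_assoc] at h
      exact add_right_cancel h
    have h2herm : ((1 : Matrix (Fin N) (Fin N) ℂ) - CM * CMᴴ).IsHermitian := by
      rw [← hB]; exact Matrix.isHermitian_mul_conjTranspose_self B
    have s3 : eigM (Matrix.isHermitian_mul_conjTranspose_self B)
        = (eigM (Matrix.isHermitian_mul_conjTranspose_self CM)).map (fun t => 1 - t) := by
      rw [eigM_congr hB (Matrix.isHermitian_mul_conjTranspose_self B) h2herm]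
      exact eigM_one_sub (Matrix.isHermitian_mul_conjTranspose_self CM) h2herm
    have cardK : Fintype.card ↥K = k := by rw [Fintype.card_coe, hK]
    have s4 : eigM (Matrix.isHermitian_mul_conjTranspose_self CM)
        = eigM (Matrix.isHermitian_conjTranspose_mul_self CM) + Multiset.replicate (N - k) 0 := by
      have h := eigM_mul_comm CM
      have hrep : Multiset.replicate N (0:ℝ) = Multiset.replicate (N - k) 0
          + Multiset.replicate k 0 := by
        rw [← Multiset.replicate_add]; congr 1; omega
      rw [Fintype.card_fin, cardK, hrep, ← add_assoc] at h
      exact (add_right_cancel h).symm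
    have comp_id : ((fun t : ℝ => 1 - t) ∘ (fun t : ℝ => 1 - t)) = id := by
      funext t; simp
    have total : eigM (Matrix.isHermitian_conjTranspose_mul_self A)
        = eigM (Matrix.isHermitian_conjTranspose_mul_self CM)
          + Multiset.replicate (N - k) 0 + Multiset.replicate (L - k) 1 := by
      rw [s1, s2, Multiset.map_add, s3, Multiset.map_map, comp_id, Multiset.map_id, s4,
        Multiset.map_replicate]
      norm_num
    rw [nuclearNorm, nuclearNorm, sum_sqrt_eigM, sum_sqrt_eigM, total]
    rw [Multiset.map_add, Multiset.map_add, Multiset.map_replicate, Multiset.map_replicate,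
      Multiset.sum_add, Multiset.sum_add, Multiset.sum_replicate, Multiset.sum_replicate]
    rw [Real.sqrt_zero, Real.sqrt_one]
    rw [smul_zero, add_zero, nsmul_eq_mul, mul_one, Nat.cast_sub hkL]
  refine ⟨main, ?_⟩
  have hkM : k ≤ M := by omega
  have step : ∑ K ∈ Finset.powersetCard (M - k) (Finset.univ : Finset (Fin M)),
      nuclearNorm (colSub Ψ K)
      = ∑ K ∈ Finset.powersetCard k (Finset.univ : Finset (Fin M)),
        nuclearNorm (colSub Ψ Kᶜ) := by
    apply Finset.sum_nbij' (i := fun K => Kᶜ) (j := fun K => Kᶜ)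
    · intro a ha
      rw [Finset.mem_powersetCard] at ha ⊢
      refine ⟨Finset.subset_univ _, ?_⟩
      rw [Finset.card_compl, ha.2, Fintype.card_fin]
      omega
    · intro a ha
      rw [Finset.mem_powersetCard] at ha ⊢
      refine ⟨Finset.subset_univ _, ?_⟩
      rw [Finset.card_compl, ha.2, Fintype.card_fin]
    · intro a _; exact compl_compl a
    · intro a _; exact compl_compl a
    · intro a _; rw [compl_compl]
  rw [step]
  have congrsum : ∑ K ∈ Finset.powersetCard k (Finset.univ : Finset (Fin M)),
      nuclearNorm (colSub Ψ Kᶜ)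
      = ∑ K ∈ Finset.powersetCard k (Finset.univ : Finset (Fin M)),
        (nuclearNorm (colSub Φ K) + ((L : ℝ) - (k : ℝ))) := by
    apply Finset.sum_congr rfl
    intro K hK
    rw [Finset.mem_powersetCard] at hK
    exact main K hK.2
  rw [congrsum, Finset.sum_add_distrib, Finset.sum_const, Finset.card_powersetCard,
    Finset.card_univ, Fintype.card_fin, nsmul_eq_mul, mul_comm]
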